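/- Let X and Y be random variables on a probability space taking values in [0,1], and let ε > 0. Suppose that for all Borel sets E, E' ⊆ ℝ one has |P(X ∈ E and Y ∈ E') − P(X ∈ E)·P(Y ∈ E')| ≤ ε. Then the covariance of X and Y satisfies |E[XY] − E[X]·E[Y]| ≤ ε. -/

import Mathlib

open MeasureTheory ENNReal

section Aux

variable {Ω : Type*} [MeasurableSpace Ω] (P : Measure Ω) [IsProbabilityMeasure P]

/-- 1-d layer cake for [0,1]-valued variables. -/
lemma aux_layer1 {f : Ω → ℝ} (hf : Measurable f) (hf01 : ∀ ω, f ω ∈ Set.Icc (0:ℝ) 1) :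
    ∫⁻ ω, ENNReal.ofReal (f ω) ∂P
      = ∫⁻ s in Set.Ioc (0:ℝ) 1, P {ω | s < f ω} ∂volume := by
  set S : Set (Ω × ℝ) := {q | q.2 < f q.1} with hS
  have hSm : MeasurableSet S := measurableSet_lt measurable_snd (hf.comp measurable_fst)
  have key : ∀ ω, ENNReal.ofReal (f ω)
      = ∫⁻ s in Set.Ioc (0:ℝ) 1, S.indicator 1 (ω, s) ∂volume := by
    intro ω
    have h1 : (fun s => S.indicator (1 : Ω × ℝ → ℝ≥0∞) (ω, s))
        = fun s => (Set.Iio (f ω)).indicator 1 s := by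
      funext s
      by_cases h : s < f ω <;> simp [hS, Set.indicator, h]
    rw [h1, lintegral_indicator_one measurableSet_Iio]
    rw [Measure.restrict_apply measurableSet_Iio]
    have : Set.Iio (f ω) ∩ Set.Ioc (0:ℝ) 1 = Set.Ioo 0 (f ω) := by
      ext t
      have h1 := (hf01 ω).2
      constructor
      · rintro ⟨ht1, ht2, ht3⟩; exact ⟨ht2, ht1⟩
      · rintro ⟨ht1, ht2⟩; exact ⟨ht2, ht1, le_trans ht2.le h1⟩
    rw [this, Real.volume_Ioo, sub_zero]
  calc ∫⁻ ω, ENNReal.ofReal (f ω) ∂P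
      = ∫⁻ ω, ∫⁻ s in Set.Ioc (0:ℝ) 1, S.indicator 1 (ω, s) ∂volume ∂P := by
        exact lintegral_congr key
    _ = ∫⁻ s in Set.Ioc (0:ℝ) 1, ∫⁻ ω, S.indicator 1 (ω, s) ∂P ∂volume := by
        apply lintegral_lintegral_swap
        exact ((measurable_one.indicator hSm).comp measurable_id).aemeasurable
    _ = ∫⁻ s in Set.Ioc (0:ℝ) 1, P {ω | s < f ω} ∂volume := by
        apply lintegral_congr
        intro s
        have h1 : (fun ω => S.indicator (1 : Ω × ℝ → ℝ≥0∞) (ω, s))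
            = fun ω => ({ω | s < f ω}).indicator 1 ω := by
          funext ω
          by_cases h : s < f ω <;> simp [hS, Set.indicator, h]
        rw [h1, lintegral_indicator_one (measurableSet_lt measurable_const hf)]

end Aux

theorem eps_independent_cov_bound
    {Ω : Type*} [MeasurableSpace Ω] (P : Measure Ω) [IsProbabilityMeasure P]
    {X Y : Ω → ℝ} (hX : Measurable X) (hY : Measurable Y)
    (hX01 : ∀ ω, X ω ∈ Set.Icc (0 : ℝ) 1) (hY01 : ∀ ω, Y ω ∈ Set.Icc (0 : ℝ) 1)
    {ε : ℝ} (hε : 0 < ε)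
    (hind : ∀ E E' : Set ℝ, MeasurableSet E → MeasurableSet E' →
      |(P (X ⁻¹' E ∩ Y ⁻¹' E')).toReal -
        (P (X ⁻¹' E)).toReal * (P (Y ⁻¹' E')).toReal| ≤ ε) :
    |(∫ ω, X ω * Y ω ∂P) - (∫ ω, X ω ∂P) * (∫ ω, Y ω ∂P)| ≤ ε := by
  classical
  set Q : Set (ℝ × ℝ) := Set.Ioc (0:ℝ) 1 ×ˢ Set.Ioc (0:ℝ) 1 with hQ
  have hQm : MeasurableSet Q := (measurableSet_Ioc).prod (measurableSet_Ioc)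
  set F : ℝ × ℝ → ℝ≥0∞ := fun p => P {ω | p.1 < X ω ∧ p.2 < Y ω} with hF
  set G : ℝ × ℝ → ℝ≥0∞ := fun p => P {ω | p.1 < X ω} * P {ω | p.2 < Y ω} with hG
  -- measurability of F
  set S2 : Set ((ℝ × ℝ) × Ω) := {q | q.1.1 < X q.2 ∧ q.1.2 < Y q.2} with hS2
  have hS2m : MeasurableSet S2 := by
    apply MeasurableSet.inter
    · exact measurableSet_lt (measurable_fst.comp measurable_fst) (hX.comp measurable_snd)
    · exact measurableSet_lt (measurable_snd.comp measurable_fst) (hY.comp measurable_snd)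
  have hFmeas : Measurable F :=
    measurable_measure_prodMk_left (ν := P) hS2m
  have hGmeas : Measurable G := by
    have h1 : Measurable fun s : ℝ => P {ω | s < X ω} := by
      exact measurable_measure_prodMk_left (ν := P)
        (s := {q : ℝ × Ω | q.1 < X q.2}) (measurableSet_lt measurable_fst (hX.comp measurable_snd))
    have h2 : Measurable fun t : ℝ => P {ω | t < Y ω} := by
      exact measurable_measure_prodMk_left (ν := P)
        (s := {q : ℝ × Ω | q.1 < Y q.2}) (measurableSet_lt measurable_fst (hY.comp measurable_snd))
    exact (h1.comp measurable_fst).mul (h2.comp measurable_snd)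
  -- Step 1: E[XY] = (∫⁻ in Q, F).toReal
  have step1 : ∫ ω, X ω * Y ω ∂P = (∫⁻ p in Q, F p ∂volume).toReal := by
    have hnn : 0 ≤ᶠ[ae P] fun ω => X ω * Y ω := by
      filter_upwards with ω using mul_nonneg (hX01 ω).1 (hY01 ω).1
    rw [integral_eq_lintegral_of_nonneg_ae hnn ((hX.mul hY).aestronglyMeasurable)]
    congr 1
    set T : Set (Ω × (ℝ × ℝ)) := {q | q.2.1 < X q.1 ∧ q.2.2 < Y q.1} with hT
    have hTm : MeasurableSet T := by
      apply MeasurableSet.inter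
      · exact measurableSet_lt (measurable_fst.comp measurable_snd) (hX.comp measurable_fst)
      · exact measurableSet_lt (measurable_snd.comp measurable_snd) (hY.comp measurable_fst)
    have key : ∀ ω, ENNReal.ofReal (X ω * Y ω)
        = ∫⁻ p in Q, T.indicator 1 (ω, p) ∂volume := by
      intro ω
      have h1 : (fun p : ℝ × ℝ => T.indicator (1 : Ω × (ℝ × ℝ) → ℝ≥0∞) (ω, p))
          = fun p => ({p : ℝ × ℝ | p.1 < X ω ∧ p.2 < Y ω}).indicator 1 p := by
        funext p
        by_cases h : p.1 < X ω ∧ p.2 < Y ω <;> simp [hT, Set.indicator, h]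
      have hsm : MeasurableSet {p : ℝ × ℝ | p.1 < X ω ∧ p.2 < Y ω} :=
        MeasurableSet.inter (measurableSet_lt measurable_fst measurable_const)
          (measurableSet_lt measurable_snd measurable_const)
      rw [h1, lintegral_indicator_one hsm, Measure.restrict_apply hsm]
      have hset : {p : ℝ × ℝ | p.1 < X ω ∧ p.2 < Y ω} ∩ Q
          = Set.Ioo 0 (X ω) ×ˢ Set.Ioo 0 (Y ω) := by
        ext p
        simp only [hQ, Set.mem_inter_iff, Set.mem_setOf_eq, Set.mem_prod, Set.mem_Ioc,
          Set.mem_Ioo]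
        constructor
        · rintro ⟨⟨h1, h2⟩, ⟨h3, _⟩, ⟨h4, _⟩⟩
          exact ⟨⟨h3, h1⟩, h4, h2⟩
        · rintro ⟨⟨h1, h2⟩, h3, h4⟩
          exact ⟨⟨h2, h4⟩, ⟨h1, le_trans h2.le (hX01 ω).2⟩, h3, le_trans h4.le (hY01 ω).2⟩
      rw [hset, Measure.volume_eq_prod, Measure.prod_prod, Real.volume_Ioo, Real.volume_Ioo,
        sub_zero, sub_zero, ENNReal.ofReal_mul (hX01 ω).1]
    calc ∫⁻ ω, ENNReal.ofReal (X ω * Y ω) ∂P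
        = ∫⁻ ω, ∫⁻ p in Q, T.indicator 1 (ω, p) ∂volume ∂P := lintegral_congr key
      _ = ∫⁻ p in Q, ∫⁻ ω, T.indicator 1 (ω, p) ∂P ∂volume := by
          apply lintegral_lintegral_swap
          exact ((measurable_one.indicator hTm).comp measurable_id).aemeasurable
      _ = ∫⁻ p in Q, F p ∂volume := by
          apply lintegral_congr
          intro p
          have h1 : (fun ω => T.indicator (1 : Ω × (ℝ × ℝ) → ℝ≥0∞) (ω, p))
              = fun ω => ({ω | p.1 < X ω ∧ p.2 < Y ω}).indicator 1 ω := by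
            funext ω
            by_cases h : p.1 < X ω ∧ p.2 < Y ω <;> simp [hT, Set.indicator, h]
          have hm : MeasurableSet {ω | p.1 < X ω ∧ p.2 < Y ω} :=
            MeasurableSet.inter (measurableSet_lt measurable_const hX)
              (measurableSet_lt measurable_const hY)
          rw [h1, lintegral_indicator_one hm]
  -- Step 2: E[X]E[Y] = (∫⁻ in Q, G).toReal
  have step2 : (∫ ω, X ω ∂P) * (∫ ω, Y ω ∂P) = (∫⁻ p in Q, G p ∂volume).toReal := by
    have hXnn : 0 ≤ᶠ[ae P] X := by filter_upwards with ω using (hX01 ω).1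
    have hYnn : 0 ≤ᶠ[ae P] Y := by filter_upwards with ω using (hY01 ω).1
    rw [integral_eq_lintegral_of_nonneg_ae hXnn hX.aestronglyMeasurable,
        integral_eq_lintegral_of_nonneg_ae hYnn hY.aestronglyMeasurable,
        aux_layer1 P hX hX01, aux_layer1 P hY hY01, ← ENNReal.toReal_mul]
    congr 1
    rw [← lintegral_prod_mul (μ := volume.restrict (Set.Ioc (0:ℝ) 1))
      (ν := volume.restrict (Set.Ioc (0:ℝ) 1))
      (f := fun s => P {ω | s < X ω}) (g := fun t => P {ω | t < Y ω})
      (by exact ((measurable_measure_prodMk_left (ν := P)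
        (measurableSet_lt measurable_fst (hX.comp measurable_snd)))).aemeasurable)
      (by exact ((measurable_measure_prodMk_left (ν := P)
        (measurableSet_lt measurable_fst (hY.comp measurable_snd)))).aemeasurable)]
    rw [Measure.prod_restrict, ← Measure.volume_eq_prod]
  -- Finiteness and pointwise bounds
  have hFle : ∀ p, F p ≤ 1 := fun p => prob_le_one
  have hGle : ∀ p, G p ≤ 1 := fun p =>
    mul_le_one' prob_le_one prob_le_one
  have hQvol : volume Q = 1 := by
    rw [hQ, Measure.volume_eq_prod, Measure.prod_prod, Real.volume_Ioc]
    norm_num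
  set ν : Measure (ℝ × ℝ) := volume.restrict Q with hν
  have hνuniv : ν Set.univ = 1 := by
    rw [hν, Measure.restrict_apply_univ, hQvol]
  have hAne : ∫⁻ p, F p ∂ν ≠ ⊤ := by
    apply ne_top_of_le_ne_top (b := 1)
    · exact one_ne_top
    · calc ∫⁻ p, F p ∂ν ≤ ∫⁻ _, 1 ∂ν := lintegral_mono hFle
        _ = ν Set.univ := lintegral_one
        _ = 1 := hνuniv
  have hBne : ∫⁻ p, G p ∂ν ≠ ⊤ := by
    apply ne_top_of_le_ne_top (b := 1)
    · exact one_ne_top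
    · calc ∫⁻ p, G p ∂ν ≤ ∫⁻ _, 1 ∂ν := lintegral_mono hGle
        _ = ν Set.univ := lintegral_one
        _ = 1 := hνuniv
  have hA : (∫⁻ p, F p ∂ν).toReal = ∫ p, (F p).toReal ∂ν := by
    rw [integral_toReal (hFmeas.aemeasurable) (by
      filter_upwards with p using lt_of_le_of_lt (hFle p) one_lt_top)]
  have hB : (∫⁻ p, G p ∂ν).toReal = ∫ p, (G p).toReal ∂ν := by
    rw [integral_toReal (hGmeas.aemeasurable) (by
      filter_upwards with p using lt_of_le_of_lt (hGle p) one_lt_top)]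
  have hFint : Integrable (fun p => (F p).toReal) ν :=
    integrable_toReal_of_lintegral_ne_top hFmeas.aemeasurable hAne
  have hGint : Integrable (fun p => (G p).toReal) ν :=
    integrable_toReal_of_lintegral_ne_top hGmeas.aemeasurable hBne
  have hbound : ∀ p : ℝ × ℝ, |(F p).toReal - (G p).toReal| ≤ ε := by
    intro p
    have h := hind (Set.Ioi p.1) (Set.Ioi p.2) measurableSet_Ioi measurableSet_Ioi
    have e1 : X ⁻¹' Set.Ioi p.1 ∩ Y ⁻¹' Set.Ioi p.2 = {ω | p.1 < X ω ∧ p.2 < Y ω} := rfl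
    have e2 : X ⁻¹' Set.Ioi p.1 = {ω | p.1 < X ω} := rfl
    have e3 : Y ⁻¹' Set.Ioi p.2 = {ω | p.2 < Y ω} := rfl
    rw [e1, e2, e3] at h
    simpa [hF, hG, ENNReal.toReal_mul] using h
  have : IsFiniteMeasure ν := ⟨by rw [hνuniv]; exact one_lt_top⟩
  rw [step1, step2, hA, hB, ← integral_sub hFint hGint]
  calc |∫ p, ((F p).toReal - (G p).toReal) ∂ν|
      ≤ ∫ p, |(F p).toReal - (G p).toReal| ∂ν := by
        simpa [Real.norm_eq_abs] using
          norm_integral_le_integral_norm (fun p => (F p).toReal - (G p).toReal) (μ := ν)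
    _ ≤ ∫ _, ε ∂ν := integral_mono (hFint.sub hGint).abs (integrable_const ε)
        (fun p => hbound p)
    _ = ε := by
        rw [integral_const]
        simp [measureReal_def, hνuniv]
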